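/- Let M : ℝ → ℝ be even, differentiable on ℝ with |M'(ξ)| ≤ C₀ (1+ξ²)^{β/2} for all ξ and some β < 1, three times continuously differentiable with Lipschitz continuous third derivative on [-ξ₁, ξ₁] for some ξ₁ > 0, with sup_{|ξ| ≥ ξ₁} M(ξ) < M(0), sup_{|ξ| ≤ ξ₁} M''(ξ) < 0, and inf_{ξ∈ℝ} ( M(ξ) + M(0) ) > 0. Then there exists C > 0 such that for every ε ≠ 0 and every ξ ∈ ℝ, | ε² / ( M(0) - (1/2) M''(0) ε² - M(εξ) ) + 2 / ( M''(0) (1 + ξ²) ) | ≤ C ε². -/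

import Mathlib

open MeasureTheory Filter Topology Set

set_option maxHeartbeats 1000000

lemma itdw_eq {f : ℝ → ℝ} {u : Set ℝ} (hu : IsOpen u) {n : ℕ} (hf : ContDiffOn ℝ n f u)
    {s : Set ℝ} (hs : UniqueDiffOn ℝ s) (hsu : s ⊆ u) {x : ℝ} (hx : x ∈ s) :
    iteratedDerivWithin n f s x = iteratedDeriv n f x := by
  have H : HasFTaylorSeriesUpToOn (n : ℕ∞) f (ftaylorSeriesWithin ℝ f u) u :=
    hf.ftaylorSeriesWithin hu.uniqueDiffOn
  have H2 := (H.mono hsu).eq_iteratedFDerivWithin_of_uniqueDiffOn (m := n)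
    (by exact_mod_cast le_rfl) hs hx
  have H3 : ftaylorSeriesWithin ℝ f u x n = iteratedFDeriv ℝ n f x := by
    have := iteratedFDerivWithin_of_isOpen (f := f) (𝕜 := ℝ) n hu (hsu hx)
    simpa [ftaylorSeriesWithin] using this
  rw [iteratedDerivWithin_eq_iteratedFDerivWithin, iteratedDeriv_eq_iteratedFDeriv, ← H2, H3]

lemma deriv_odd_of_even {f : ℝ → ℝ} (h : ∀ x, f (-x) = f x) :
    ∀ x : ℝ, deriv f (-x) = -deriv f x := by
  intro x
  have h1 : (fun x : ℝ => f (-x)) = f := funext h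
  have := deriv_comp_neg (f := f) (x := x)
  rw [h1] at this
  linarith [this]

lemma deriv_even_of_odd {f : ℝ → ℝ} (h : ∀ x, f (-x) = -f x) :
    ∀ x : ℝ, deriv f (-x) = deriv f x := by
  intro x
  have h1 : (fun x : ℝ => f (-x)) = fun x => -f x := funext h
  have h2 := deriv_comp_neg (f := f) (x := x)
  rw [h1] at h2
  have h3 : deriv (fun x : ℝ => -f x) x = -deriv f x := deriv.neg
  linarith [h2, h3]

lemma local_taylor (M : ℝ → ℝ) (ξ₁ : ℝ) (hξ₁ : 0 < ξ₁)
    (hC3 : ContDiffOn ℝ 3 M (Icc (-ξ₁) ξ₁)) (L : NNReal)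
    (hLip : LipschitzOnWith L (iteratedDeriv 3 M) (Icc (-ξ₁) ξ₁))
    (hd1 : deriv M 0 = 0) (hd3 : iteratedDeriv 3 M 0 = 0)
    (t : ℝ) (ht0 : 0 < t) (ht1 : t ≤ ξ₁ / 2) :
    |M t - M 0 - deriv (deriv M) 0 / 2 * t ^ 2| ≤ (L : ℝ) * t ^ 4 := by
  have hsubU : Icc (0:ℝ) t ⊆ Ioo (-ξ₁) ξ₁ := by
    intro x hx
    constructor <;> [linarith [hx.1]; linarith [hx.2]]
  have hsub : Icc (0:ℝ) t ⊆ Icc (-ξ₁) ξ₁ :=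
    hsubU.trans Ioo_subset_Icc_self
  have hC3U : ContDiffOn ℝ 3 M (Ioo (-ξ₁) ξ₁) := hC3.mono Ioo_subset_Icc_self
  have hud : UniqueDiffOn ℝ (Icc (0:ℝ) t) := uniqueDiffOn_Icc ht0
  have hf : ContDiffOn ℝ 2 M (Icc 0 t) := (hC3.mono hsub).of_le (by norm_num)
  have hf' : DifferentiableOn ℝ (iteratedDerivWithin 2 M (Icc 0 t)) (Ioo 0 t) :=
    ((hC3.mono hsub).differentiableOn_iteratedDerivWithin (by norm_num) hud).mono
      Ioo_subset_Icc_self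
  have hTay0 := taylor_mean_remainder_lagrange (n := 2) (x₀ := 0) (x := t) ht0.ne
    (by rwa [uIcc_of_le ht0.le]) (by rwa [uIcc_of_le ht0.le, uIoo_of_le ht0.le])
  rw [uIcc_of_le ht0.le, uIoo_of_le ht0.le] at hTay0
  obtain ⟨x', hx', hTay⟩ := hTay0
  have hx'mem : x' ∈ Icc (0:ℝ) t := Ioo_subset_Icc_self hx'
  have h0mem : (0:ℝ) ∈ Icc (0:ℝ) t := Set.left_mem_Icc.mpr ht0.le
  have e1 : iteratedDerivWithin 1 M (Icc 0 t) 0 = 0 := by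
    rw [itdw_eq isOpen_Ioo (hC3U.of_le (by norm_num)) hud hsubU h0mem]
    rw [iteratedDeriv_one]; exact hd1
  have e2 : iteratedDerivWithin 2 M (Icc 0 t) 0 = deriv (deriv M) 0 := by
    rw [itdw_eq isOpen_Ioo (hC3U.of_le (by norm_num)) hud hsubU h0mem]
    rw [iteratedDeriv_succ, iteratedDeriv_one]
  have e3 : iteratedDerivWithin 3 M (Icc 0 t) x' = iteratedDeriv 3 M x' := by
    exact itdw_eq isOpen_Ioo hC3U hud hsubU hx'mem
  have hTP : taylorWithinEval M 2 (Icc 0 t) 0 t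
      = M 0 + deriv (deriv M) 0 / 2 * t ^ 2 := by
    simp [taylorWithinEval_succ, taylor_within_zero_eval, e1, e2, Nat.factorial]
    ring
  rw [hTP, e3] at hTay
  have hbound : |iteratedDeriv 3 M x'| ≤ (L : ℝ) * t := by
    have := hLip.dist_le_mul x' (hsub hx'mem) 0 (hsub h0mem)
    rw [Real.dist_eq, Real.dist_eq, hd3] at this
    simp only [sub_zero] at this
    calc |iteratedDeriv 3 M x'| ≤ (L:ℝ) * |x'| := this
      _ ≤ (L:ℝ) * t := by
          have : |x'| ≤ t := by
            rw [abs_of_nonneg hx'mem.1]; exact hx'mem.2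
          exact mul_le_mul_of_nonneg_left this L.2
  have : M t - (M 0 + deriv (deriv M) 0 / 2 * t ^ 2)
      = iteratedDeriv 3 M x' * t ^ 3 / 6 := by
    rw [hTay]; norm_num [Nat.factorial]
  have habs : |M t - M 0 - deriv (deriv M) 0 / 2 * t ^ 2|
      = |iteratedDeriv 3 M x'| * t ^ 3 / 6 := by
    rw [show M t - M 0 - deriv (deriv M) 0 / 2 * t ^ 2
        = M t - (M 0 + deriv (deriv M) 0 / 2 * t ^ 2) by ring, this]
    rw [abs_div, abs_mul, abs_pow, abs_of_pos ht0]
    norm_num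
  rw [habs]
  have h4 : |iteratedDeriv 3 M x'| * t ^ 3 ≤ ((L:ℝ) * t) * t ^ 3 :=
    mul_le_mul_of_nonneg_right hbound (by positivity)
  have h5 : (L:ℝ) * t * t ^ 3 = (L:ℝ) * t ^ 4 := by ring
  have h6 : 0 ≤ (L:ℝ) * t ^ 4 := mul_nonneg L.2 (by positivity)
  linarith

lemma concave_bound (M : ℝ → ℝ) (ξ₁ m₂ : ℝ) (hξ₁ : 0 < ξ₁) (hdiff : Differentiable ℝ M)
    (hd1 : deriv M 0 = 0) (hm₂0 : m₂ < 0)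
    (hm₂ : ∀ ξ : ℝ, |ξ| ≤ ξ₁ → deriv (deriv M) ξ ≤ m₂) :
    ∀ t : ℝ, 0 ≤ t → t ≤ ξ₁ → M t ≤ M 0 + m₂ / 2 * t ^ 2 := by
  have hdd : ∀ x : ℝ, |x| ≤ ξ₁ → DifferentiableAt ℝ (deriv M) x := by
    intro x hx
    by_contra hcon
    have := deriv_zero_of_not_differentiableAt hcon
    have := hm₂ x hx
    linarith
  have step1 : ∀ s : ℝ, 0 < s → s ≤ ξ₁ → deriv M s ≤ m₂ * s := by
    intro s hs0 hs1
    have habs : ∀ x : ℝ, x ∈ Icc (0:ℝ) s → |x| ≤ ξ₁ := by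
      intro x hx; rw [abs_of_nonneg hx.1]; linarith [hx.2]
    have hfc : ContinuousOn (deriv M) (Icc 0 s) := fun x hx =>
      ((hdd x (habs x hx)).continuousAt).continuousWithinAt
    have hfd : DifferentiableOn ℝ (deriv M) (Ioo 0 s) := fun x hx =>
      (hdd x (habs x (Ioo_subset_Icc_self hx))).differentiableWithinAt
    obtain ⟨c, hc, hslope⟩ := exists_deriv_eq_slope (deriv M) hs0 hfc hfd
    have hcle : |c| ≤ ξ₁ := by
      rw [abs_of_nonneg hc.1.le]; linarith [hc.2]
    have := hm₂ c hcle
    rw [hslope, hd1, sub_zero] at this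
    rw [div_le_iff₀ (by linarith : (0:ℝ) < s - 0)] at this
    linarith [this]
  set φ : ℝ → ℝ := fun x => M 0 + m₂ / 2 * x ^ 2 - M x with hφ
  have hφd : ∀ x : ℝ, HasDerivAt φ (m₂ * x - deriv M x) x := by
    intro x
    have h1 : HasDerivAt (fun x : ℝ => x ^ 2) (2 * x) x := by
      simpa using hasDerivAt_pow 2 x
    have h2 : HasDerivAt (fun x : ℝ => M 0 + m₂ / 2 * x ^ 2) (m₂ / 2 * (2 * x)) x :=
      (h1.const_mul (m₂ / 2)).const_add (M 0)
    have h3 := h2.sub (hdiff x).hasDerivAt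
    rw [show m₂ * x - deriv M x = m₂ / 2 * (2 * x) - deriv M x by ring]
    exact h3
  have hmono : MonotoneOn φ (Icc (0:ℝ) ξ₁) := by
    apply monotoneOn_of_deriv_nonneg (convex_Icc 0 ξ₁)
    · exact fun x _ => ((hφd x).continuousAt).continuousWithinAt
    · intro x hx
      exact (hφd x).differentiableAt.differentiableWithinAt
    · intro x hx
      rw [interior_Icc] at hx
      rw [(hφd x).deriv]
      have := step1 x hx.1 hx.2.le
      linarith
  intro t ht0 ht1
  have := hmono (left_mem_Icc.mpr hξ₁.le) ⟨ht0, ht1⟩ ht0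
  simp only [hφ] at this
  nlinarith [this]

/-- Lemma 3.6 (Stefanov–Wright): uniform approximation of the rescaled resolvent symbol
`ε²/(ω_ε - M(εξ))` by the KdV resolvent symbol `-2/(M''(0)(1+ξ²))`,
where `ω_ε = M(0) - (1/2) M''(0) ε²`. -/
theorem rescaled_resolvent_approximation (M : ℝ → ℝ) (β ξ₁ C₀ : ℝ)
    (hβ : β < 1) (hξ₁ : ξ₁ > 0) (hC₀ : C₀ > 0)
    (heven : ∀ ξ : ℝ, M (-ξ) = M ξ)
    (hdiff : Differentiable ℝ M)
    (hder : ∀ ξ : ℝ, |deriv M ξ| ≤ C₀ * (1 + ξ ^ 2) ^ (β / 2))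
    (hC3 : ContDiffOn ℝ 3 M (Icc (-ξ₁) ξ₁))
    (hLip : ∃ L : NNReal, LipschitzOnWith L (iteratedDeriv 3 M) (Icc (-ξ₁) ξ₁))
    (hm₁ : ∃ m₁ < M 0, ∀ ξ : ℝ, ξ₁ ≤ |ξ| → M ξ ≤ m₁)
    (hm₂ : ∃ m₂ < (0 : ℝ), ∀ ξ : ℝ, |ξ| ≤ ξ₁ → deriv (deriv M) ξ ≤ m₂)
    (hm₃ : ∃ m₃ > (0 : ℝ), ∀ ξ : ℝ, m₃ ≤ M ξ + M 0) :
    ∃ C > 0, ∀ ε : ℝ, ε ≠ 0 → ∀ ξ : ℝ,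
      |ε ^ 2 / (M 0 - (1/2) * deriv (deriv M) 0 * ε ^ 2 - M (ε * ξ))
          + 2 / (deriv (deriv M) 0 * (1 + ξ ^ 2))|
        ≤ C * ε ^ 2 := by
  obtain ⟨L, hLip⟩ := hLip
  obtain ⟨m₁, hm₁M, hm₁⟩ := hm₁
  obtain ⟨m₂, hm₂0, hm₂⟩ := hm₂
  obtain ⟨m₃, hm₃0, hm₃⟩ := hm₃
  -- basic derivative facts
  have hd1 : deriv M 0 = 0 := by
    have := deriv_odd_of_even heven 0
    simp at this; linarith
  have hd3 : iteratedDeriv 3 M 0 = 0 := by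
    have h1 : ∀ x : ℝ, deriv M (-x) = -deriv M x := deriv_odd_of_even heven
    have h2 : ∀ x : ℝ, deriv (deriv M) (-x) = deriv (deriv M) x :=
      deriv_even_of_odd (fun x => by simpa using h1 x)
    have h3 : ∀ x : ℝ, deriv (deriv (deriv M)) (-x) = -deriv (deriv (deriv M)) x :=
      deriv_odd_of_even (fun x => by simpa using h2 x)
    have h30 := h3 0
    rw [iteratedDeriv_succ, iteratedDeriv_succ, iteratedDeriv_one]
    simp at h30
    linarith
  set μ := deriv (deriv M) 0 with hμdef
  have hμm : μ ≤ m₂ := hm₂ 0 (by simpa using hξ₁.le)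
  have hμ0 : μ < 0 := lt_of_le_of_lt hμm hm₂0
  -- local fourth-order bound
  have hloc : ∀ t : ℝ, |t| ≤ ξ₁ / 2 → |M t - M 0 - μ / 2 * t ^ 2| ≤ (L:ℝ) * t ^ 4 := by
    intro t ht
    rcases lt_trichotomy t 0 with htneg | htz | htpos
    · have habs : |(-t)| ≤ ξ₁/2 := by rwa [abs_neg]
      have := local_taylor M ξ₁ hξ₁ hC3 L hLip hd1 hd3 (-t) (by linarith)
        (by rwa [abs_of_pos (by linarith : (0:ℝ) < -t)] at habs)
      have hMt : M (-t) = M t := heven t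
      rw [hMt] at this
      calc |M t - M 0 - μ / 2 * t ^ 2| = |M t - M 0 - μ / 2 * (-t) ^ 2| := by ring_nf
        _ ≤ (L:ℝ) * (-t) ^ 4 := this
        _ = (L:ℝ) * t ^ 4 := by ring
    · subst htz; simp
    · exact local_taylor M ξ₁ hξ₁ hC3 L hLip hd1 hd3 t htpos
        (by rwa [abs_of_pos htpos] at ht)
  -- global concavity bound on [-ξ₁, ξ₁]
  have hconc : ∀ t : ℝ, |t| ≤ ξ₁ → M t ≤ M 0 + m₂ / 2 * t ^ 2 := by
    intro t ht
    have key := concave_bound M ξ₁ m₂ hξ₁ hdiff hd1 hm₂0 hm₂ |t| (abs_nonneg t) ht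
    have : M |t| = M t := by
      rcases le_or_gt 0 t with h | h
      · rw [abs_of_nonneg h]
      · rw [abs_of_neg h]; exact heven t
    rw [this, sq_abs] at key
    exact key
  -- constants
  set B₀ : ℝ := 2 * M 0 - m₃ with hB₀def
  have hB₀ : 0 ≤ B₀ := by have := hm₃ 0; rw [hB₀def]; linarith
  set q : ℝ := -μ / 2 with hqdef
  have hq : 0 < q := by rw [hqdef]; linarith
  set c : ℝ := -m₂ / 2 with hcdef
  have hc : 0 < c := by rw [hcdef]; linarith
  have hcq : c ≤ q := by rw [hcdef, hqdef]; linarith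
  set w : ℝ := (ξ₁ / 2) ^ 2 with hwdef
  have hw : 0 < w := by positivity
  set m₁' : ℝ := max m₁ (M 0 + m₂ / 2 * w) with hm₁'def
  set δ : ℝ := M 0 - m₁' with hδdef
  have hδ : 0 < δ := by
    have h1 : m₁' < M 0 := by
      apply max_lt hm₁M
      have h2 : m₂ / 2 * w < 0 := mul_neg_of_neg_of_pos (by linarith) hw
      linarith
    rw [hδdef]; linarith
  have hglob : ∀ t : ℝ, ξ₁ / 2 ≤ |t| → M t ≤ m₁' := by
    intro t ht
    rcases le_total ξ₁ |t| with h | h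
    · exact le_max_of_le_left (hm₁ t h)
    · apply le_max_of_le_right
      have h1 := hconc t h
      have h2 : w ≤ t ^ 2 := by
        rw [← sq_abs t]
        exact pow_le_pow_left₀ (by positivity) ht 2
      have h3 : m₂ / 2 * t ^ 2 ≤ m₂ / 2 * w :=
        mul_le_mul_of_nonpos_left h2 (by linarith)
      linarith
  set A : ℝ := B₀ / w + q with hAdef
  set C₁ : ℝ := (L:ℝ) / (c * q) with hC₁def
  set C₂ : ℝ := A / (δ * q) with hC₂def
  have hC₂ : 0 < C₂ := by
    apply div_pos
    · have h0 : 0 ≤ B₀ / w := by positivity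
      rw [hAdef]; linarith
    · positivity
  refine ⟨max C₁ C₂, lt_max_of_lt_right hC₂, ?_⟩
  intro ε hε ξ
  have hε2 : (0:ℝ) < ε ^ 2 := by positivity
  set h : ℝ := ε * ξ with hhdef
  set S : ℝ := ε ^ 2 + h ^ 2 with hSdef
  have hSpos : 0 < S := by positivity
  have hSs : S = ε ^ 2 * (1 + ξ ^ 2) := by rw [hSdef, hhdef]; ring
  have hs1 : (0:ℝ) < 1 + ξ ^ 2 := by positivity
  set D : ℝ := M 0 - (1/2) * μ * ε ^ 2 - M h with hDdef
  set R : ℝ := M h - M 0 - μ / 2 * h ^ 2 with hRdef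
  -- case analysis on |h|
  rcases le_or_gt |h| (ξ₁ / 2) with hcase | hcase
  · -- local case
    have hMh := hconc h (le_trans hcase (by linarith))
    have hDlow : c * S ≤ D := by
      have he1 : c * h ^ 2 = -(m₂ / 2) * h ^ 2 := by rw [hcdef]; ring
      have h1 : c * h ^ 2 ≤ M 0 - M h := by rw [he1]; linarith [hMh]
      have h2 : c * ε ^ 2 ≤ -(1/2) * μ * ε ^ 2 := by
        have h3 := mul_le_mul_of_nonneg_right hcq (le_of_lt hε2)
        have h4 : q * ε ^ 2 = -(1/2) * μ * ε ^ 2 := by rw [hqdef]; ring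
        linarith
      have h5 : c * S = c * ε ^ 2 + c * h ^ 2 := by rw [hSdef]; ring
      rw [hDdef]
      linarith
    have hD : 0 < D := lt_of_lt_of_le (by positivity) hDlow
    have hR : |R| ≤ (L:ℝ) * S ^ 2 := by
      have h1 := hloc h hcase
      have hh2 : h ^ 2 ≤ S := by rw [hSdef]; linarith [sq_nonneg ε]
      have h2 : h ^ 4 ≤ S ^ 2 := by
        calc h ^ 4 = (h ^ 2) ^ 2 := by ring
          _ ≤ S ^ 2 := pow_le_pow_left₀ (sq_nonneg h) hh2 2
      calc |R| ≤ (L:ℝ) * h ^ 4 := h1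
        _ ≤ (L:ℝ) * S ^ 2 := mul_le_mul_of_nonneg_left h2 L.2
    have hDne : D ≠ 0 := ne_of_gt hD
    have hqSne : q * S ≠ 0 := by positivity
    have hqsd : q * S - D = R := by rw [hqdef, hSdef, hDdef, hRdef]; ring
    have hden : μ * (1 + ξ ^ 2) ≠ 0 := mul_ne_zero hμ0.ne (ne_of_gt hs1)
    have key : 2 / (μ * (1 + ξ ^ 2)) = -ε ^ 2 / (q * S) := by
      rw [div_eq_div_iff hden hqSne, hqdef, hSs]; ring
    have hnum : ε ^ 2 * (q * S) - D * ε ^ 2 = ε ^ 2 * R := by rw [← hqsd]; ring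
    have hid : ε ^ 2 / D + 2 / (μ * (1 + ξ ^ 2)) = ε ^ 2 * R / (D * (q * S)) := by
      rw [key, neg_div, ← sub_eq_add_neg, div_sub_div _ _ hDne hqSne, hnum]
    rw [hid]
    have habs : |ε ^ 2 * R / (D * (q * S))| = ε ^ 2 * |R| / (D * (q * S)) := by
      rw [abs_div, abs_mul, abs_of_pos (show (0:ℝ) < D * (q * S) by positivity),
        abs_of_pos hε2]
    rw [habs]
    have hden : (c * S) * (q * S) ≤ D * (q * S) :=
      mul_le_mul_of_nonneg_right hDlow (by positivity)
    calc ε ^ 2 * |R| / (D * (q * S))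
        ≤ ε ^ 2 * ((L:ℝ) * S ^ 2) / ((c * S) * (q * S)) := by
          apply div_le_div₀ (by positivity)
            (mul_le_mul_of_nonneg_left hR (le_of_lt hε2)) (by positivity) hden
      _ = C₁ * ε ^ 2 := by
          rw [hC₁def]; field_simp
      _ ≤ max C₁ C₂ * ε ^ 2 :=
          mul_le_mul_of_nonneg_right (le_max_left _ _) (le_of_lt hε2)
  · -- global case
    have hMh := hglob h hcase.le
    have hDlow : δ ≤ D := by
      have h0 : 0 < (-(1/2) * μ) * ε ^ 2 := mul_pos (by linarith) hε2
      rw [hDdef, hδdef]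
      nlinarith [hMh]
    have hD : 0 < D := lt_of_lt_of_le hδ hDlow
    have hR : |R| ≤ B₀ + q * h ^ 2 := by
      have hq2 : q * h ^ 2 = -(μ / 2) * h ^ 2 := by rw [hqdef]; ring
      have hq2n : 0 ≤ q * h ^ 2 := by positivity
      have hm3h := hm₃ h
      have hδ' : m₁' = M 0 - δ := by rw [hδdef]; ring
      have hup : M h ≤ M 0 - δ := hδ' ▸ hMh
      rw [abs_le]
      constructor
      · rw [hRdef, hB₀def]; linarith
      · rw [hRdef, hB₀def]; linarith
    have hw2 : w ≤ h ^ 2 := by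
      rw [← sq_abs h]
      exact pow_le_pow_left₀ (by positivity) hcase.le 2
    have hDne : D ≠ 0 := ne_of_gt hD
    have hqSne : q * S ≠ 0 := by positivity
    have hqsd : q * S - D = R := by rw [hqdef, hSdef, hDdef, hRdef]; ring
    have hden : μ * (1 + ξ ^ 2) ≠ 0 := mul_ne_zero hμ0.ne (ne_of_gt hs1)
    have key : 2 / (μ * (1 + ξ ^ 2)) = -ε ^ 2 / (q * S) := by
      rw [div_eq_div_iff hden hqSne, hqdef, hSs]; ring
    have hnum : ε ^ 2 * (q * S) - D * ε ^ 2 = ε ^ 2 * R := by rw [← hqsd]; ring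
    have hid : ε ^ 2 / D + 2 / (μ * (1 + ξ ^ 2)) = ε ^ 2 * R / (D * (q * S)) := by
      rw [key, neg_div, ← sub_eq_add_neg, div_sub_div _ _ hDne hqSne, hnum]
    rw [hid]
    have habs : |ε ^ 2 * R / (D * (q * S))| = ε ^ 2 * |R| / (D * (q * S)) := by
      rw [abs_div, abs_mul, abs_of_pos (show (0:ℝ) < D * (q * S) by positivity),
        abs_of_pos hε2]
    rw [habs]
    have hden : δ * (q * S) ≤ D * (q * S) :=
      mul_le_mul_of_nonneg_right hDlow (by positivity)
    have hnum : B₀ + q * h ^ 2 ≤ A * S := by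
      have hwS : w ≤ S := by
        have : h ^ 2 ≤ S := by rw [hSdef]; linarith [sq_nonneg ε]
        linarith
      have h1 : B₀ ≤ B₀ / w * S := by
        rw [div_mul_eq_mul_div, le_div_iff₀ hw]
        exact mul_le_mul_of_nonneg_left hwS hB₀
      have h2 : q * h ^ 2 ≤ q * S := by
        apply mul_le_mul_of_nonneg_left _ (le_of_lt hq)
        rw [hSdef]; linarith [sq_nonneg ε]
      have h3 : A * S = B₀ / w * S + q * S := by rw [hAdef]; ring
      rw [h3]; exact add_le_add h1 h2
    calc ε ^ 2 * |R| / (D * (q * S))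
        ≤ ε ^ 2 * (A * S) / (δ * (q * S)) := by
          apply div_le_div₀ (by positivity) _ (by positivity) hden
          calc ε ^ 2 * |R| ≤ ε ^ 2 * (B₀ + q * h ^ 2) :=
                mul_le_mul_of_nonneg_left hR (le_of_lt hε2)
            _ ≤ ε ^ 2 * (A * S) := mul_le_mul_of_nonneg_left hnum (le_of_lt hε2)
      _ = C₂ * ε ^ 2 := by
          rw [hC₂def]; field_simp
      _ ≤ max C₁ C₂ * ε ^ 2 :=
          mul_le_mul_of_nonneg_right (le_max_right _ _) (le_of_lt hε2)
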